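/- arXiv:0802.3284 — 4 statements merged into one kernel-verified Lean document; each statement's English description precedes it below -/
import Mathlib

section
/- For every connected finite simple graph G on n vertices, F(G) ≤ 2^{n−1} + 1, with equality if and only if G is the star S_n. -/
open Finset
open scoped Classical

/-- The Fibonacci index: the number of independent (stable) sets of `G`,
including the empty set. -/
noncomputable def fibIndex {V : Type*} [Fintype V] (G : SimpleGraph V) : ℕ :=
  (Finset.univ.filter fun s : Finset V => ∀ a ∈ s, ∀ b ∈ s, ¬ G.Adj a b).card

/-- The independence (stability) number of `G`. -/
noncomputable def indepNum {V : Type*} [Fintype V] (G : SimpleGraph V) : ℕ :=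
  (Finset.univ.filter fun s : Finset V => ∀ a ∈ s, ∀ b ∈ s, ¬ G.Adj a b).sup Finset.card

lemma walk_cross {V : Type*} [Fintype V] {G : SimpleGraph V} {S : Finset V} :
    ∀ {a b : V}, G.Walk a b → a ∈ S → b ∉ S → ∃ x ∈ S, ∃ y, y ∉ S ∧ G.Adj x y := by
  intro a b w
  induction w with
  | nil => intro ha hb; exact absurd ha hb
  | @cons u v b hadj p ih =>
    intro ha hb
    by_cases hv : v ∈ S
    · exact ih hv hb
    · exact ⟨u, ha, v, hv, hadj⟩

lemma crossing {V : Type*} [Fintype V] {G : SimpleGraph V} (h : G.Connected) {S : Finset V}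
    {a b : V} (ha : a ∈ S) (hb : b ∉ S) : ∃ x ∈ S, ∃ y, y ∉ S ∧ G.Adj x y := by
  obtain ⟨w⟩ := h.preconnected a b
  exact walk_cross w ha hb

lemma nondom_bound {V : Type*} [Fintype V] {G : SimpleGraph V} (hG : G.Connected)
    (hnd : ∀ r : V, ∃ x, x ≠ r ∧ ¬ G.Adj r x) :
    fibIndex G ≤ 2 ^ (Fintype.card V - 1) := by
  have : Nonempty V := hG.nonempty
  -- Step A: a vertex r with two distinct neighbors p q
  obtain ⟨r, p, q, hpq, hrp, hrq⟩ :
      ∃ r p q : V, p ≠ q ∧ G.Adj r p ∧ G.Adj r q := by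
    obtain ⟨v⟩ := ‹Nonempty V›
    obtain ⟨w, hwv, hnadj⟩ := hnd v
    obtain ⟨x, hx, u, hu, hadj⟩ := crossing hG (S := {v}) (mem_singleton_self v)
      (by simpa using hwv)
    rw [show x = v from mem_singleton.mp hx] at hadj
    have huv : u ≠ v := by simpa using hu
    have hwS : w ∉ ({v, u} : Finset V) := by
      simp only [mem_insert, mem_singleton]
      rintro (rfl | rfl)
      · exact hwv rfl
      · exact hnadj hadj
    obtain ⟨x, hx, y, hy, hadj2⟩ := crossing hG (S := {v, u})
      (by simp : v ∈ ({v, u} : Finset V)) hwS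
    simp only [mem_insert, mem_singleton] at hx hy
    push_neg at hy
    rcases hx with rfl | rfl
    · exact ⟨x, u, y, fun h => hy.2 h.symm, hadj, hadj2⟩
    · exact ⟨x, v, y, fun h => hy.1 h.symm, hadj.symm, hadj2⟩
  -- Step B: an edge a-b avoiding r
  obtain ⟨a, b, har, hbr, hab⟩ : ∃ a b : V, a ≠ r ∧ b ≠ r ∧ G.Adj a b := by
    obtain ⟨w, hwr, hnadj⟩ := hnd r
    obtain ⟨x, hx, y, hy, hadj⟩ := crossing hG (S := {w}) (mem_singleton_self w)
      (by simpa using (Ne.symm hwr))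
    rw [show x = w from mem_singleton.mp hx] at hadj
    have hyr : y ≠ r := by
      rintro rfl
      exact hnadj hadj.symm
    exact ⟨w, y, hwr, hyr, hadj⟩
  set W : Finset V := univ.filter (fun x => x ≠ r ∧ ¬ G.Adj r x) with hW
  -- cardinality comparison
  have hcard3 : ({r, p, q} : Finset V).card = 3 := by
    rw [card_insert_of_notMem, card_insert_of_notMem, card_singleton]
    · simpa using hpq
    · simp only [mem_insert, mem_singleton]
      push_neg
      exact ⟨hrp.ne, hrq.ne⟩
  have hcard3' : ({r, a, b} : Finset V).card = 3 := by
    rw [card_insert_of_notMem, card_insert_of_notMem, card_singleton]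
    · simpa using hab.ne
    · simp only [mem_insert, mem_singleton]
      push_neg
      exact ⟨Ne.symm har, Ne.symm hbr⟩
  have hWsub : W ⊆ univ \ {r, p, q} := by
    intro x hx
    simp only [hW, mem_filter, mem_univ, true_and] at hx
    simp only [mem_sdiff, mem_univ, true_and, mem_insert, mem_singleton]
    push_neg
    refine ⟨hx.1, ?_, ?_⟩
    · rintro rfl; exact hx.2 hrp
    · rintro rfl; exact hx.2 hrq
  have hWcard : W.card ≤ (univ \ ({r, a, b} : Finset V)).card := by
    calc W.card ≤ (univ \ ({r, p, q} : Finset V)).card := card_le_card hWsub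
      _ = Fintype.card V - 3 := by
          rw [card_sdiff_of_subset (subset_univ _), hcard3, card_univ]
      _ = (univ \ ({r, a, b} : Finset V)).card := by
          rw [card_sdiff_of_subset (subset_univ _), hcard3', card_univ]
  -- get an injection j from W into univ \ {r,a,b}
  obtain ⟨e⟩ : Nonempty (↥W ↪ ↥(univ \ ({r, a, b} : Finset V))) := by
    apply Function.Embedding.nonempty_of_card_le
    rw [Fintype.card_coe, Fintype.card_coe]
    exact hWcard
  set j : V → V := fun x => if h : x ∈ W then (e ⟨x, h⟩ : V) else x with hj
  have hjmem : ∀ x (h : x ∈ W), j x ∈ univ \ ({r, a, b} : Finset V) := by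
    intro x h
    simp only [hj, dif_pos h]
    exact (e ⟨x, h⟩).2
  have hjinj : ∀ x ∈ W, ∀ y ∈ W, j x = j y → x = y := by
    intro x hx y hy hxy
    simp only [hj, dif_pos hx, dif_pos hy] at hxy
    have := e.injective (Subtype.ext hxy)
    exact congrArg Subtype.val this
  set Φ : Finset V → Finset V :=
    fun S => if r ∈ S then ((S.erase r).image j) ∪ {a, b} else S with hΦ
  have hsubW : ∀ S : Finset V, (∀ x ∈ S, ∀ y ∈ S, ¬ G.Adj x y) → r ∈ S → S.erase r ⊆ W := by
    intro S hS hr x hx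
    obtain ⟨hxr, hxS⟩ := mem_erase.mp hx
    simp only [hW, mem_filter, mem_univ, true_and]
    exact ⟨hxr, hS r hr x hxS⟩
  have key : fibIndex G ≤ ((univ.erase r).powerset).card := by
    apply Finset.card_le_card_of_injOn Φ
    · intro S hS
      simp only [mem_coe, mem_filter, mem_univ, true_and] at hS
      simp only [mem_coe, mem_powerset]
      intro x hx
      refine mem_erase.mpr ⟨?_, mem_univ x⟩
      by_cases hr : r ∈ S
      · simp only [hΦ, if_pos hr, mem_union, mem_image, mem_insert, mem_singleton] at hx
        rcases hx with ⟨w, hw, rfl⟩ | rfl | rfl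
        · have := hjmem w (hsubW S hS hr hw)
          simp only [mem_sdiff, mem_insert, mem_singleton] at this
          push_neg at this
          exact this.2.1
        · exact har
        · exact hbr
      · simp only [hΦ, if_neg hr] at hx
        rintro rfl; exact hr hx
    · intro S1 hS1 S2 hS2 heq
      simp only [Finset.coe_filter, Set.mem_setOf_eq, mem_univ, true_and] at hS1 hS2
      by_cases h1 : r ∈ S1 <;> by_cases h2 : r ∈ S2
      · -- both contain r
        simp only [hΦ, if_pos h1, if_pos h2] at heq
        have herase : S1.erase r = S2.erase r := by
          have himg : ∀ (S T : Finset V), (∀ x ∈ S, ∀ y ∈ S, ¬ G.Adj x y) → r ∈ S →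
              (∀ x ∈ T, ∀ y ∈ T, ¬ G.Adj x y) → r ∈ T →
              ((S.erase r).image j) ∪ {a, b} = ((T.erase r).image j) ∪ {a, b} →
              S.erase r ⊆ T.erase r := by
            intro S T hS hrS hT hrT he x hx
            have hxW : x ∈ W := hsubW S hS hrS hx
            have hjx : j x ∈ ((T.erase r).image j) ∪ {a, b} := by
              rw [← he]
              exact mem_union_left _ (mem_image_of_mem j hx)
            have hjx' := hjmem x hxW
            simp only [mem_sdiff, mem_insert, mem_singleton] at hjx'
            push_neg at hjx'
            rcases mem_union.mp hjx with hmem | hmem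
            · obtain ⟨y, hy, hxy⟩ := mem_image.mp hmem
              have := hjinj y (hsubW T hT hrT hy) x hxW hxy
              rwa [← this]
            · simp only [mem_insert, mem_singleton] at hmem
              rcases hmem with h | h
              · exact absurd h hjx'.2.2.1
              · exact absurd h hjx'.2.2.2
          exact Finset.Subset.antisymm (himg S1 S2 hS1 h1 hS2 h2 heq)
            (himg S2 S1 hS2 h2 hS1 h1 heq.symm)
        ext x
        by_cases hxr : x = r
        · subst hxr; simp [h1, h2]
        · constructor
          · intro h
            exact (mem_erase.mp (herase ▸ mem_erase.mpr ⟨hxr, h⟩)).2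
          · intro h
            exact (mem_erase.mp (herase ▸ mem_erase.mpr ⟨hxr, h⟩ : x ∈ S1.erase r)).2
      · -- r ∈ S1, r ∉ S2 : contradiction
        exfalso
        simp only [hΦ, if_pos h1, if_neg h2] at heq
        have hamem : a ∈ S2 := by
          rw [← heq]; exact mem_union_right _ (by simp)
        have hbmem : b ∈ S2 := by
          rw [← heq]; exact mem_union_right _ (by simp)
        exact hS2 a hamem b hbmem hab
      · exfalso
        simp only [hΦ, if_neg h1, if_pos h2] at heq
        have hamem : a ∈ S1 := by
          rw [heq]; exact mem_union_right _ (by simp)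
        have hbmem : b ∈ S1 := by
          rw [heq]; exact mem_union_right _ (by simp)
        exact hS1 a hamem b hbmem hab
      · simpa [hΦ, if_neg h1, if_neg h2] using heq
  calc fibIndex G ≤ ((univ.erase r).powerset).card := key
    _ = 2 ^ (Fintype.card V - 1) := by
        rw [card_powerset, card_erase_of_mem (mem_univ r), card_univ]

lemma star_count {V : Type*} [Fintype V] {G : SimpleGraph V} {c : V}
    (hstar : ∀ a b, G.Adj a b ↔ a ≠ b ∧ (a = c ∨ b = c)) :
    fibIndex G = 2 ^ (Fintype.card V - 1) + 1 := by
  have hset : (Finset.univ.filter fun s : Finset V => ∀ a ∈ s, ∀ b ∈ s, ¬ G.Adj a b)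
      = insert {c} ((univ.erase c).powerset) := by
    ext S
    simp only [mem_filter, mem_univ, true_and, mem_insert, mem_powerset]
    constructor
    · intro hS
      by_cases hc : c ∈ S
      · left
        apply Finset.Subset.antisymm
        · intro s hs
          simp only [mem_singleton]
          by_contra hne
          exact hS s hs c hc ((hstar s c).mpr ⟨hne, Or.inr rfl⟩)
        · simpa using hc
      · right
        intro s hs
        exact mem_erase.mpr ⟨fun h => hc (h ▸ hs), mem_univ s⟩
    · rintro (rfl | hsub)
      · intro a ha b hb
        simp only [mem_singleton] at ha hb
        subst ha; subst hb
        exact fun h => (G.loopless.irrefl _ h)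
      · intro a ha b hb hadj
        rcases ((hstar a b).mp hadj).2 with h | h
        · exact (mem_erase.mp (hsub ha)).1 h
        · exact (mem_erase.mp (hsub hb)).1 h
  rw [fibIndex, hset, card_insert_of_notMem, card_powerset, card_erase_of_mem (mem_univ c),
    card_univ]
  simp only [mem_powerset]
  intro h
  exact (mem_erase.mp (h (mem_singleton_self c))).1 rfl

lemma dom_subset {V : Type*} [Fintype V] {G : SimpleGraph V} {r : V}
    (hr : ∀ x, x ≠ r → G.Adj r x) :
    (Finset.univ.filter fun s : Finset V => ∀ a ∈ s, ∀ b ∈ s, ¬ G.Adj a b)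
      ⊆ insert {r} ((univ.erase r).powerset) := by
  intro S hS
  simp only [mem_filter, mem_univ, true_and] at hS
  simp only [mem_insert, mem_powerset]
  by_cases hc : r ∈ S
  · left
    apply Finset.Subset.antisymm
    · intro s hs
      simp only [mem_singleton]
      by_contra hne
      exact hS r hc s hs (hr s hne)
    · simpa using hc
  · right
    intro s hs
    exact mem_erase.mpr ⟨fun h => hc (h ▸ hs), mem_univ s⟩

lemma dom_bound {V : Type*} [Fintype V] {G : SimpleGraph V} {r : V}
    (hr : ∀ x, x ≠ r → G.Adj r x) :
    fibIndex G ≤ 2 ^ (Fintype.card V - 1) + 1 := by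
  have := Finset.card_le_card (dom_subset hr)
  calc fibIndex G ≤ (insert ({r} : Finset V) ((univ.erase r).powerset)).card := this
    _ ≤ ((univ.erase r).powerset).card + 1 := card_insert_le _ _
    _ = 2 ^ (Fintype.card V - 1) + 1 := by
        rw [card_powerset, card_erase_of_mem (mem_univ r), card_univ]

lemma dom_eq_star {V : Type*} [Fintype V] {G : SimpleGraph V} {r : V}
    (hr : ∀ x, x ≠ r → G.Adj r x)
    (heq : fibIndex G = 2 ^ (Fintype.card V - 1) + 1) :
    ∀ a b, G.Adj a b ↔ a ≠ b ∧ (a = r ∨ b = r) := by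
  have hnm : ({r} : Finset V) ∉ (univ.erase r).powerset := by
    simp only [mem_powerset]
    intro h
    exact (mem_erase.mp (h (mem_singleton_self r))).1 rfl
  have hcard : (insert ({r} : Finset V) ((univ.erase r).powerset)).card
      = 2 ^ (Fintype.card V - 1) + 1 := by
    rw [card_insert_of_notMem hnm, card_powerset, card_erase_of_mem (mem_univ r), card_univ]
  have hset := Finset.eq_of_subset_of_card_le (dom_subset hr) (by rw [hcard, ← heq]; rfl)
  -- hset : insert {r} powerset = filter
  have hindep : ∀ A : Finset V, A ⊆ univ.erase r → ∀ a ∈ A, ∀ b ∈ A, ¬ G.Adj a b := by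
    intro A hA
    have : A ∈ (Finset.univ.filter fun s : Finset V => ∀ a ∈ s, ∀ b ∈ s, ¬ G.Adj a b) := by
      rw [hset]
      exact mem_insert_of_mem (mem_powerset.mpr hA)
    simpa using this
  intro a b
  constructor
  · intro hadj
    refine ⟨hadj.ne, ?_⟩
    by_contra h
    push_neg at h
    obtain ⟨ha, hb⟩ := h
    have hsub : ({a, b} : Finset V) ⊆ univ.erase r := by
      intro x hx
      rcases mem_insert.mp hx with rfl | hx
      · exact mem_erase.mpr ⟨ha, mem_univ _⟩
      · rw [mem_singleton] at hx
        subst hx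
        exact mem_erase.mpr ⟨hb, mem_univ _⟩
    exact hindep _ hsub a (by simp) b (by simp) hadj
  · rintro ⟨hne, rfl | rfl⟩
    · exact hr b hne.symm
    · exact (hr a hne).symm

theorem stmt_7 {V : Type*} [Fintype V] (G : SimpleGraph V) (n : ℕ)
    (hn : n = Fintype.card V) (hG : G.Connected) :
    fibIndex G ≤ 2 ^ (n - 1) + 1 ∧
      (fibIndex G = 2 ^ (n - 1) + 1 ↔
        ∃ c : V, ∀ a b, G.Adj a b ↔ a ≠ b ∧ (a = c ∨ b = c)) := by
  subst hn
  by_cases hdom : ∃ r : V, ∀ x, x ≠ r → G.Adj r x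
  · obtain ⟨r, hr⟩ := hdom
    refine ⟨dom_bound hr, ?_, ?_⟩
    · intro heq
      exact ⟨r, dom_eq_star hr heq⟩
    · rintro ⟨c, hc⟩
      exact star_count hc
  · push_neg at hdom
    have hb := nondom_bound hG hdom
    refine ⟨hb.trans (Nat.le_succ _), ?_, ?_⟩
    · intro heq
      omega
    · rintro ⟨c, hc⟩
      exfalso
      obtain ⟨x, hxc, hnadj⟩ := hdom c
      exact hnadj ((hc c x).mpr ⟨Ne.symm hxc, Or.inl rfl⟩)
end

section
/- Let G be an α-critical graph and v a non-isolated vertex of G. Then α(G) = α(G − v) and α(G) = α(G − N[v]) + 1. -/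
open Finset
open scoped Classical

/-- A graph is `α`-critical if deleting any edge strictly increases the
independence number (a graph with no edges is `α`-critical by convention). -/
noncomputable def AlphaCritical {V : Type*} [Fintype V] (G : SimpleGraph V) : Prop :=
  ∀ e ∈ G.edgeSet, indepNum G < indepNum (G.deleteEdges {e})

lemma card_le_indepNum {V : Type*} [Fintype V] (G : SimpleGraph V) {s : Finset V}
    (h : ∀ a ∈ s, ∀ b ∈ s, ¬ G.Adj a b) : s.card ≤ indepNum G :=
  Finset.le_sup (Finset.mem_filter.mpr ⟨Finset.mem_univ _, h⟩)

lemma exists_indep {V : Type*} [Fintype V] (G : SimpleGraph V) :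
    ∃ s : Finset V, (∀ a ∈ s, ∀ b ∈ s, ¬ G.Adj a b) ∧ s.card = indepNum G := by
  obtain ⟨s, hs, h⟩ := Finset.exists_mem_eq_sup
    (Finset.univ.filter fun s : Finset V => ∀ a ∈ s, ∀ b ∈ s, ¬ G.Adj a b)
    ⟨∅, by simp⟩ Finset.card
  exact ⟨s, (Finset.mem_filter.mp hs).2, h.symm⟩

lemma indepNum_induce_le {V : Type*} [Fintype V] (G : SimpleGraph V) (P : Set V)
    [Fintype ↥P] : indepNum (G.induce P) ≤ indepNum G := by
  obtain ⟨t, hind, htc⟩ := exists_indep (G.induce P)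
  rw [← htc]
  have hc : (t.map (Function.Embedding.subtype _)).card = t.card := Finset.card_map _
  rw [← hc]
  refine card_le_indepNum G ?_
  intro a ha b hb hab
  simp only [Finset.mem_map, Function.Embedding.coe_subtype] at ha hb
  obtain ⟨a', ha', rfl⟩ := ha
  obtain ⟨b', hb', rfl⟩ := hb
  exact hind a' ha' b' hb' hab

lemma card_le_indepNum_induce {V : Type*} [Fintype V] (G : SimpleGraph V) (P : Set V)
    [Fintype ↥P] {s : Finset V} (hind : ∀ a ∈ s, ∀ b ∈ s, ¬ G.Adj a b) (hsub : ∀ x ∈ s, x ∈ P) :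
    s.card ≤ indepNum (G.induce P) := by
  set emb : {x // x ∈ s} ↪ P :=
    ⟨fun x => ⟨x.1, hsub _ x.2⟩, fun a b h => Subtype.ext (congrArg Subtype.val h : ((⟨a.1, _⟩ : P) : V) = _)⟩ with hemb
  have hc : (s.attach.map emb).card = s.card := by simp
  rw [← hc]
  apply card_le_indepNum
  intro a ha b hb hab
  simp only [Finset.mem_map, Finset.mem_attach, true_and, hemb] at ha hb
  obtain ⟨a', rfl⟩ := ha
  obtain ⟨b', rfl⟩ := hb
  exact hind a'.1 a'.2 b'.1 b'.2 hab

theorem stmt_11 {V : Type*} [Fintype V] (G : SimpleGraph V)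
    (hcrit : AlphaCritical G) (v : V) (hv : ∃ w, G.Adj v w) :
    indepNum G = indepNum (G.induce ({v}ᶜ : Set V)) ∧
      indepNum G = indepNum (G.induce ((insert v (G.neighborSet v))ᶜ : Set V)) + 1 := by
  obtain ⟨w, hw⟩ := hv
  have hvw : v ≠ w := G.ne_of_adj hw
  have hlt := hcrit s(v, w) hw
  obtain ⟨S, hS, hScard⟩ := exists_indep (G.deleteEdges {s(v, w)})
  have hSbig : indepNum G < S.card := hScard ▸ hlt
  have hSindep : ∀ a ∈ S, ∀ b ∈ S, G.Adj a b → s(a, b) = s(v, w) := by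
    intro a ha b hb hab
    by_contra hne
    exact hS a ha b hb (by simp [SimpleGraph.deleteEdges_adj, hab, hne])
  have hvS : v ∈ S := by
    by_contra hvS
    have hind : ∀ a ∈ S, ∀ b ∈ S, ¬ G.Adj a b := by
      intro a ha b hb hab
      have h := hSindep a ha b hb hab
      rw [Sym2.eq_iff] at h
      rcases h with ⟨rfl, rfl⟩ | ⟨rfl, rfl⟩
      · exact hvS ha
      · exact hvS hb
    have := card_le_indepNum G hind
    omega
  have hwS : w ∈ S := by
    by_contra hwS
    have hind : ∀ a ∈ S, ∀ b ∈ S, ¬ G.Adj a b := by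
      intro a ha b hb hab
      have h := hSindep a ha b hb hab
      rw [Sym2.eq_iff] at h
      rcases h with ⟨rfl, rfl⟩ | ⟨rfl, rfl⟩
      · exact hwS hb
      · exact hwS ha
    have := card_le_indepNum G hind
    omega
  constructor
  · -- first part
    refine le_antisymm ?_ (indepNum_induce_le G _)
    have hind : ∀ a ∈ S.erase v, ∀ b ∈ S.erase v, ¬ G.Adj a b := by
      intro a ha b hb hab
      have h := hSindep a (Finset.mem_of_mem_erase ha) b (Finset.mem_of_mem_erase hb) hab
      rw [Sym2.eq_iff] at h
      rcases h with ⟨rfl, rfl⟩ | ⟨rfl, rfl⟩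
      · exact Finset.ne_of_mem_erase ha rfl
      · exact Finset.ne_of_mem_erase hb rfl
    have hsub : ∀ x ∈ S.erase v, x ∈ ({v}ᶜ : Set V) := by
      intro x hx
      simpa using Finset.ne_of_mem_erase hx
    have h1 : (S.erase v).card ≤ indepNum (G.induce ({v}ᶜ : Set V)) :=
      card_le_indepNum_induce G _ hind hsub
    have h2 : (S.erase v).card = S.card - 1 := Finset.card_erase_of_mem hvS
    omega
  · -- second part
    have hvT : v ∈ S.erase w := Finset.mem_erase.mpr ⟨hvw, hvS⟩
    have hTind : ∀ a ∈ S.erase w, ∀ b ∈ S.erase w, ¬ G.Adj a b := by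
      intro a ha b hb hab
      have h := hSindep a (Finset.mem_of_mem_erase ha) b (Finset.mem_of_mem_erase hb) hab
      rw [Sym2.eq_iff] at h
      rcases h with ⟨rfl, rfl⟩ | ⟨rfl, rfl⟩
      · exact Finset.ne_of_mem_erase hb rfl
      · exact Finset.ne_of_mem_erase ha rfl
    refine le_antisymm ?_ ?_
    · -- indepNum G ≤ indepNum induce + 1
      set E := (S.erase w).erase v with hE
      have hind : ∀ a ∈ E, ∀ b ∈ E, ¬ G.Adj a b := fun a ha b hb =>
        hTind a (Finset.mem_of_mem_erase ha) b (Finset.mem_of_mem_erase hb)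
      have hsub : ∀ x ∈ E, x ∈ ((insert v (G.neighborSet v))ᶜ : Set V) := by
        intro x hx
        have hxv : x ≠ v := Finset.ne_of_mem_erase hx
        have hna : ¬ G.Adj v x := hTind v hvT x (Finset.mem_of_mem_erase hx)
        simp only [Set.mem_compl_iff, Set.mem_insert_iff, SimpleGraph.mem_neighborSet]
        tauto
      have h1 : E.card ≤ indepNum (G.induce ((insert v (G.neighborSet v))ᶜ : Set V)) :=
        card_le_indepNum_induce G _ hind hsub
      have h2 : E.card = (S.erase w).card - 1 := Finset.card_erase_of_mem hvT
      have h3 : (S.erase w).card = S.card - 1 := Finset.card_erase_of_mem hwS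
      have h4 : 1 ≤ (S.erase w).card := Finset.card_pos.mpr ⟨v, hvT⟩
      omega
    · -- indepNum induce + 1 ≤ indepNum G
      obtain ⟨U, hU, hUcard'⟩ :=
        exists_indep (G.induce ((insert v (G.neighborSet v))ᶜ : Set V))
      have hUcard : U.card = indepNum (G.induce ((insert v (G.neighborSet v))ᶜ : Set V)) :=
        hUcard'
      set U' := U.map (Function.Embedding.subtype _) with hU'
      have hmem : ∀ x ∈ U', x ≠ v ∧ ¬ G.Adj v x := by
        intro x hx
        simp only [hU', Finset.mem_map, Function.Embedding.coe_subtype] at hx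
        obtain ⟨x', _, rfl⟩ := hx
        have := x'.2
        simp only [Set.mem_compl_iff, Set.mem_insert_iff, SimpleGraph.mem_neighborSet] at this
        tauto
      have hvU' : v ∉ U' := fun h => (hmem v h).1 rfl
      have hins : ∀ a ∈ insert v U', ∀ b ∈ insert v U', ¬ G.Adj a b := by
        intro a ha b hb hab
        rcases Finset.mem_insert.mp ha with rfl | ha'
        · rcases Finset.mem_insert.mp hb with rfl | hb'
          · exact G.irrefl hab
          · exact (hmem b hb').2 hab
        · rcases Finset.mem_insert.mp hb with rfl | hb'
          · exact (hmem a ha').2 hab.symm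
          · simp only [hU', Finset.mem_map, Function.Embedding.coe_subtype] at ha' hb'
            obtain ⟨a', ha'', rfl⟩ := ha'
            obtain ⟨b', hb'', rfl⟩ := hb'
            exact hU a' ha'' b' hb'' hab
      have hc : (insert v U').card = U.card + 1 := by
        rw [Finset.card_insert_of_notMem hvU', Finset.card_map]
      have := card_le_indepNum G hins
      omega
end

section
/- Define f_T(n, α) = (⌈n/α⌉ + 1)^p · (⌊n/α⌋ + 1)^{α − p} with p = n mod α. For integers 2 ≤ α ≤ n − 1, one has f_T(n, α) = f_T(n − 1, α) + f_T(n − ⌈n/α⌉, α − 1). -/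
open Finset
open scoped Classical

/-- The Turán graph `T(n, α)`: the disjoint union of `α` balanced cliques on `n`
vertices (vertices are grouped into cliques by their residue modulo `α`; this is
the complement of Mathlib's complete multipartite `turanGraph`). -/
def turanUnionOfCliques (n α : ℕ) : SimpleGraph (Fin n) :=
  (SimpleGraph.turanGraph n α)ᶜ

/-- `f_T(n, α) = (⌈n/α⌉ + 1)^p * (⌊n/α⌋ + 1)^(α - p)` with `p = n % α`,
the Fibonacci index of the Turán graph `T(n, α)`. -/
def fT (n α : ℕ) : ℕ :=
  ((n + α - 1) / α + 1) ^ (n % α) * (n / α + 1) ^ (α - n % α)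


lemma fT_eq0 (α q : ℕ) (hα : 0 < α) : fT (α * q) α = (q + 1) ^ α := by
  unfold fT
  have h1 : α * q % α = 0 := Nat.mul_mod_right α q
  have h2 : α * q / α = q := Nat.mul_div_cancel_left q hα
  rw [h1, h2]
  simp

lemma fT_eqp (α q p : ℕ) (hp : 0 < p) (hpα : p < α) :
    fT (α * q + p) α = (q + 2) ^ p * (q + 1) ^ (α - p) := by
  have hα : 0 < α := by omega
  unfold fT
  have h1 : (α * q + p) % α = p := by
    rw [Nat.mul_add_mod, Nat.mod_eq_of_lt hpα]
  have h2 : (α * q + p) / α = q := by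
    rw [Nat.mul_add_div hα, Nat.div_eq_of_lt hpα]
    omega
  obtain ⟨s, rfl⟩ : ∃ s, p = s + 1 := ⟨p - 1, by omega⟩
  have e : α * q + (s + 1) + α - 1 = α * (q + 1) + s :=
    Nat.sub_eq_of_eq_add (by ring)
  have h3 : (α * q + (s + 1) + α - 1) / α = q + 1 := by
    rw [e, Nat.mul_add_div hα, Nat.div_eq_of_lt (by omega)]
  rw [h1, h2, h3]

theorem stmt_16 (n α : ℕ) (h1 : 2 ≤ α) (h2 : α ≤ n - 1) (hn : 1 ≤ n) :
    fT n α = fT (n - 1) α + fT (n - (n + α - 1) / α) (α - 1) := by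
  obtain ⟨β, rfl⟩ : ∃ β, α = β + 2 := ⟨α - 2, by omega⟩
  obtain ⟨q, p, hpα, hn'⟩ : ∃ q p, p < β + 2 ∧ n = (β + 2) * q + p :=
    ⟨n / (β + 2), n % (β + 2), Nat.mod_lt _ (by omega), (Nat.div_add_mod n (β + 2)).symm⟩
  have hβ1 : β + 2 - 1 = β + 1 := rfl
  rcases Nat.eq_zero_or_pos p with hp | hp
  · -- p = 0 case
    subst hp
    rw [Nat.add_zero] at hn'
    have hq2 : 2 ≤ q := by
      rcases Nat.lt_or_ge q 2 with h | h
      · interval_cases q <;> omega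
      · exact h
    obtain ⟨r, rfl⟩ : ∃ r, q = r + 2 := ⟨q - 2, by omega⟩
    have hCe : n + (β + 2) - 1 = (β + 2) * (r + 2) + (β + 1) :=
      Nat.sub_eq_of_eq_add (by rw [hn']; ring)
    have hC : (n + (β + 2) - 1) / (β + 2) = r + 2 := by
      rw [hCe, Nat.mul_add_div (by omega), Nat.div_eq_of_lt (by omega)]
    have hsub1 : n - 1 = (β + 2) * (r + 1) + (β + 1) :=
      Nat.sub_eq_of_eq_add (by rw [hn']; ring)
    have hsub2 : n - (r + 2) = (β + 1) * (r + 2) :=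
      Nat.sub_eq_of_eq_add (by rw [hn']; ring)
    rw [hC, hsub1, hsub2, hβ1, hn',
      fT_eq0 _ _ (by omega), fT_eqp _ _ _ (by omega) (by omega), fT_eq0 _ _ (by omega)]
    rw [show β + 2 - (β + 1) = 1 from by omega,
      show (β + 2 : ℕ) = (β + 1) + 1 from rfl, pow_succ]
    ring
  · -- p > 0 case
    obtain ⟨s, rfl⟩ : ∃ s, p = s + 1 := ⟨p - 1, by omega⟩
    have hCe : n + (β + 2) - 1 = (β + 2) * (q + 1) + s :=
      Nat.sub_eq_of_eq_add (by rw [hn']; ring)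
    have hC : (n + (β + 2) - 1) / (β + 2) = q + 1 := by
      rw [hCe, Nat.mul_add_div (by omega), Nat.div_eq_of_lt (by omega)]
    have hsub1 : n - 1 = (β + 2) * q + s :=
      Nat.sub_eq_of_eq_add (by rw [hn']; ring)
    have hsub2 : n - (q + 1) = (β + 1) * q + s :=
      Nat.sub_eq_of_eq_add (by rw [hn']; ring)
    rw [hC, hsub1, hsub2, hβ1, hn']
    rcases Nat.eq_zero_or_pos s with hs | hs
    · subst hs
      simp only [Nat.add_zero, Nat.zero_add]
      rw [fT_eqp _ _ 1 one_pos (by omega), fT_eq0 _ _ (by omega), fT_eq0 _ _ (by omega)]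
      rw [show β + 2 - 1 = β + 1 from rfl,
        show (β + 2 : ℕ) = (β + 1) + 1 from rfl, pow_succ]
      ring
    · obtain ⟨t, rfl⟩ : ∃ t, s = t + 1 := ⟨s - 1, by omega⟩
      rw [fT_eqp _ _ _ (by omega) (by omega), fT_eqp _ _ _ (by omega) (by omega),
        fT_eqp _ _ _ (by omega) (by omega)]
      rw [show β + 2 - (t + 1 + 1) = β - t from by omega,
        show β + 2 - (t + 1) = (β - t) + 1 from by omega,
        show β + 1 - (t + 1) = β - t from by omega,
        show (t + 1 + 1 : ℕ) = (t + 1) + 1 from rfl, pow_succ, pow_succ]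
      ring
end

section
/- The function f_T(n, α) = (⌈n/α⌉ + 1)^p · (⌊n/α⌋ + 1)^{α − p}, where p = n mod α, is strictly increasing in n for fixed α ≥ 1 (for n ≥ α), and strictly increasing in α for fixed n (for 1 ≤ α ≤ n). -/
open Finset
open scoped Classical

def g (n α : ℕ) : ℕ := (n / α + 2) ^ (n % α) * (n / α + 1) ^ (α - n % α)

lemma g_pos (n α : ℕ) : 0 < g n α := by unfold g; positivity

lemma fT_eq_g (n α : ℕ) (hα : 1 ≤ α) :
    ((n + α - 1) / α + 1) ^ (n % α) * (n / α + 1) ^ (α - n % α) = g n α := by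
  rcases Nat.eq_zero_or_pos (n % α) with h | h
  · simp [g, h]
  · have hn : 1 ≤ n := by
      rcases Nat.eq_zero_or_pos n with h0 | h0
      · simp [h0] at h
      · exact h0
    have key : (n + α - 1) / α = n / α + 1 := by
      have h1 : n + α - 1 = (n - 1) + α := by omega
      rw [h1, Nat.add_div_right _ (by omega)]
      congr 1
      have hd := Nat.div_add_mod n α
      have hm := Nat.mod_lt n (show 0 < α by omega)
      have h2 : n - 1 = (n % α - 1) + α * (n / α) := by omega
      rw [h2, Nat.add_mul_div_left _ _ (show 0 < α by omega),
        Nat.div_eq_of_lt (by omega)]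
      omega
    rw [key]; rfl

lemma step_n (n α : ℕ) (hα : 1 ≤ α) :
    (n / α + 1) * g (n + 1) α = (n / α + 2) * g n α := by
  have hα0 : 0 < α := hα
  have hm := Nat.mod_lt n hα0
  have hd := Nat.div_add_mod n α
  set q := n / α with hq
  set r := n % α with hr
  rcases Nat.lt_or_ge (r + 1) α with h | h
  · have hdiv : (n + 1) / α = q := by
      have : n + 1 = (r + 1) + α * q := by omega
      rw [this, Nat.add_mul_div_left _ _ hα0, Nat.div_eq_of_lt h]
      omega
    have hmod : (n + 1) % α = r + 1 := by
      have : n + 1 = (r + 1) + α * q := by omega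
      rw [this, Nat.add_mul_mod_self_left, Nat.mod_eq_of_lt h]
    unfold g
    rw [hdiv, hmod, ← hq, ← hr]
    have h1 : α - r = (α - (r + 1)) + 1 := by omega
    rw [h1]
    ring
  · have hreq : r + 1 = α := by omega
    have hdiv : (n + 1) / α = q + 1 := by
      have : n + 1 = α * (q + 1) := by rw [Nat.mul_succ]; omega
      rw [this, Nat.mul_div_cancel_left _ hα0]
    have hmod : (n + 1) % α = 0 := by
      have : n + 1 = α * (q + 1) := by rw [Nat.mul_succ]; omega
      rw [this, Nat.mul_mod_right]
    unfold g
    rw [hdiv, hmod, ← hq, ← hr]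
    have h1 : α - r = 1 := by omega
    simp only [pow_zero, Nat.sub_zero, one_mul]
    rw [h1, ← hreq]
    ring

lemma g_lt_succ_n (n α : ℕ) (hα : 1 ≤ α) : g n α < g (n + 1) α := by
  have h := step_n n α hα
  have hp := g_pos n α
  have : (n / α + 1) * g n α < (n / α + 1) * g (n + 1) α := by
    rw [h]; nlinarith
  exact Nat.lt_of_mul_lt_mul_left this

lemma g_mono_n (n m α : ℕ) (hα : 1 ≤ α) (h : n < m) : g n α < g m α := by
  induction h with
  | refl => exact g_lt_succ_n n α hα
  | @step m hm ih => exact ih.trans (g_lt_succ_n m α hα)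

lemma ratio (α : ℕ) (hα : 1 ≤ α) : ∀ n, α + 1 ≤ n → 4 * g n α ≤ 3 * g n (α + 1) := by
  refine Nat.le_induction ?_ ?_
  · -- base : n = α + 1
    have h1 : g (α + 1) (α + 1) = 2 ^ (α + 1) := by
      unfold g
      rw [Nat.div_self (by omega), Nat.mod_self]
      simp
    have h2 : g (α + 1) α = 3 * 2 ^ (α - 1) := by
      rcases Nat.eq_or_lt_of_le hα with h | h
      · unfold g; rw [← h]; norm_num
      · have hdiv : (α + 1) / α = 1 := by
          have : α + 1 = 1 + α * 1 := by omega
          rw [this, Nat.add_mul_div_left _ _ (by omega), Nat.div_eq_of_lt (by omega)]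
        have hmod : (α + 1) % α = 1 := by
          have : α + 1 = 1 + α * 1 := by omega
          rw [this, Nat.add_mul_mod_self_left, Nat.mod_eq_of_lt (by omega)]
        unfold g
        rw [hdiv, hmod]
        norm_num
    rw [h1, h2]
    have h3 : α + 1 = (α - 1) + 2 := by omega
    rw [h3, pow_add]
    ring_nf
    omega
  · -- step
    intro n hn ih
    have A := step_n n α hα
    have B := step_n n (α + 1) (by omega)
    set q := n / α with hq
    set q' := n / (α + 1) with hq'
    have hqq : q' ≤ q := Nat.div_le_div_left (by omega) hα
    have key : (q' + 1) * (q + 1) * (4 * g (n + 1) α)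
        ≤ (q' + 1) * (q + 1) * (3 * g (n + 1) (α + 1)) := by
      calc (q' + 1) * (q + 1) * (4 * g (n + 1) α)
          = (q' + 1) * 4 * ((q + 1) * g (n + 1) α) := by ring
        _ = (q' + 1) * 4 * ((q + 2) * g n α) := by rw [A]
        _ = (q' + 1) * (q + 2) * (4 * g n α) := by ring
        _ ≤ (q' + 1) * (q + 2) * (3 * g n (α + 1)) := Nat.mul_le_mul_left _ ih
        _ ≤ (q' + 2) * (q + 1) * (3 * g n (α + 1)) := by
            apply Nat.mul_le_mul_right
            nlinarith
        _ = (q + 1) * 3 * ((q' + 2) * g n (α + 1)) := by ring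
        _ = (q + 1) * 3 * ((q' + 1) * g (n + 1) (α + 1)) := by rw [B]
        _ = (q' + 1) * (q + 1) * (3 * g (n + 1) (α + 1)) := by ring
    exact Nat.le_of_mul_le_mul_left key (by positivity)

lemma g_lt_succ_alpha (n α : ℕ) (hα : 1 ≤ α) (hn : α + 1 ≤ n) : g n α < g n (α + 1) := by
  have h := ratio α hα n hn
  have hp := g_pos n α
  have : 3 * g n α < 3 * g n (α + 1) := by omega
  omega

lemma g_mono_alpha (n α β : ℕ) (hα : 1 ≤ α) (hαβ : α < β) : β ≤ n → g n α < g n β := by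
  induction hαβ with
  | refl => exact fun h => g_lt_succ_alpha n α hα h
  | @step m hm ih =>
      intro h
      have h1 : m ≤ n := by omega
      have h2 : 1 ≤ m := le_trans hα (Nat.le_of_succ_le hm)
      exact (ih h1).trans (g_lt_succ_alpha n m h2 h)


lemma fT_eq (n α : ℕ) (hα : 1 ≤ α) : fT n α = g n α := by
  unfold fT; exact fT_eq_g n α hα

theorem stmt_17 :
    (∀ α n m : ℕ, 1 ≤ α → α ≤ n → n < m → fT n α < fT m α) ∧
      (∀ n α β : ℕ, 1 ≤ α → α < β → β ≤ n → fT n α < fT n β) := by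
  constructor
  · intro α n m hα hαn hnm
    rw [fT_eq n α hα, fT_eq m α hα]
    exact g_mono_n n m α hα hnm
  · intro n α β hα hαβ hβn
    rw [fT_eq n α hα, fT_eq n β (by omega)]
    exact g_mono_alpha n α β hα hαβ hβn
end
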